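/- Converse bound for the average distortion class via the Heegard–Berger rate-distortion function: R_a(D|E) ≥ max min R_HB(D₁,D₂|W₁,W₂), where the max is over all λ ∈ [0,1], E₁,E₂ ≥ 0 and single-letter channels W₁,W₂ with λE₁+(1−λ)E₂ ≤ E and W_j ∈ 𝒲₁(E_j) (j=1,2), and the min is over all D₁,D₂ ∈ [0,d_max] with λD₁+(1−λ)D₂ ≤ D. -/

import Mathlib

set_option linter.unusedSectionVars false
set_option linter.unusedVariables false
set_option maxHeartbeats 1000000


open scoped BigOperators

noncomputable section

namespace UWZ

/-- real-valued indicator of a proposition. -/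
def ind (p : Prop) : ℝ := @ite ℝ p (Classical.propDecidable p) 1 0

/-- `P` is a probability distribution on the finite type `A`. -/
def IsDist {A : Type*} [Fintype A] (P : A → ℝ) : Prop :=
  (∀ a, 0 ≤ P a) ∧ ∑ a, P a = 1

/-- `W` is a channel from `A` to `B`. -/
def IsChannel {A B : Type*} [Fintype A] [Fintype B] (W : A → B → ℝ) : Prop :=
  ∀ a, IsDist (W a)

/-- the `n`-fold i.i.d. extension of `P`. -/
def iid {A : Type*} (P : A → ℝ) (n : ℕ) (xs : Fin n → A) : ℝ := ∏ t, P (xs t)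

/-- the memoryless (`n`-fold i.i.d.) extension of a channel. -/
def memoryless {A B : Type*} (W : A → B → ℝ) (n : ℕ)
    (xs : Fin n → A) (ys : Fin n → B) : ℝ :=
  ∏ t, W (xs t) (ys t)

/-- the additive (per-letter, normalized) extension of a distortion measure. -/
def dseq {A B : Type*} (d : A → B → ℝ) (n : ℕ) (xs : Fin n → A) (ys : Fin n → B) : ℝ :=
  (∑ t, d (xs t) (ys t)) / n

/-- Shannon entropy (in bits). -/
def ent {A : Type*} [Fintype A] (P : A → ℝ) : ℝ := -∑ a, P a * Real.logb 2 (P a)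

/-- mutual information of a joint distribution on `A × B` (in bits). -/
def mutInf {A B : Type*} [Fintype A] [Fintype B] (J : A × B → ℝ) : ℝ :=
  ent (fun a => ∑ b, J (a, b)) + ent (fun b => ∑ a, J (a, b)) - ent J

section WZ

variable {X Y Xh : Type*} [Fintype X] [Fintype Y] [Fintype Xh] [DecidableEq Y]

/-- expected per-letter side-information distortion `e(P,W)` of channel `W`. -/
def eDist (P : X → ℝ) (e : X → Y → ℝ) (W : X → Y → ℝ) : ℝ :=
  ∑ x, ∑ y, P x * W x y * e x y

/-- the class `𝒲₁(E)` of single-letter channels. -/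
def W1 (P : X → ℝ) (e : X → Y → ℝ) (E : ℝ) : Set (X → Y → ℝ) :=
  {W | IsChannel W ∧ eDist P e W ≤ E}

/-- `d(V,W)`: expected reproduction distortion for a test channel `V` whose output
alphabet `𝒰` is the set of functions from `Y` to `Xh`. -/
def dVW (P : X → ℝ) (d : X → Xh → ℝ) (V : X → (Y → Xh) → ℝ) (W : X → Y → ℝ) : ℝ :=
  ∑ u : Y → Xh, ∑ x, ∑ y, P x * V x u * W x y * d x (u y)

/-- `φ(V,W) = I(U;X) − I(U;Y)` under the joint law `P_X(x)V(u|x)W(y|x)`. -/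
def phi (P : X → ℝ) (V : X → (Y → Xh) → ℝ) (W : X → Y → ℝ) : ℝ :=
  mutInf (fun p : (Y → Xh) × X => P p.2 * V p.2 p.1) -
    mutInf (fun p : (Y → Xh) × Y => ∑ x, P x * V x p.1 * W x p.2)

/-- `𝒱(W,D)`. -/
def Vset (P : X → ℝ) (d : X → Xh → ℝ) (W : X → Y → ℝ) (D : ℝ) :
    Set (X → (Y → Xh) → ℝ) :=
  {V | IsChannel V ∧ dVW P d V W ≤ D}

/-- `𝒱(E,D)`. -/
def Vrob (P : X → ℝ) (e : X → Y → ℝ) (d : X → Xh → ℝ) (E D : ℝ) :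
    Set (X → (Y → Xh) → ℝ) :=
  {V | IsChannel V ∧ ∀ W ∈ W1 P e E, dVW P d V W ≤ D}

/-- the Wyner–Ziv rate-distortion function `R_WZ(D|W)`. -/
def RWZ (P : X → ℝ) (d : X → Xh → ℝ) (D : ℝ) (W : X → Y → ℝ) : ℝ :=
  sInf ((fun V => phi P V W) '' Vset P d W D)

/-- the pseudo rate-distortion function `R̃_WZ(D|W,E)`. -/
def RWZt (P : X → ℝ) (e : X → Y → ℝ) (d : X → Xh → ℝ) (D E : ℝ) (W : X → Y → ℝ) : ℝ :=
  sInf ((fun V => phi P V W) '' Vrob P e d E D)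

end WZ

/-- a (possibly stochastic) Wyner–Ziv code of blocklength `n`:
a stochastic encoder `enc : 𝒳ⁿ → ℳ` and a decoder `dec : ℳ × 𝒴ⁿ → 𝒳̂ⁿ`. -/
structure Code (X Y Xh : Type*) [Fintype X] (n : ℕ) where
  M : ℕ
  Mpos : 0 < M
  enc : (Fin n → X) → Fin M → ℝ
  enc_channel : IsChannel enc
  dec : Fin M → (Fin n → Y) → Fin n → Xh

section Codes

variable {X Y Xh : Type*} [Fintype X] [Fintype Y] [Fintype Xh]

/-- expected reproduction distortion of a code over the channel `Wn`. -/
def Code.expDist {n : ℕ} (C : Code X Y Xh n) (P : X → ℝ) (d : X → Xh → ℝ)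
    (Wn : (Fin n → X) → (Fin n → Y) → ℝ) : ℝ :=
  ∑ xs, ∑ ys, ∑ m, iid P n xs * Wn xs ys * C.enc xs m * dseq d n xs (C.dec m ys)

/-- probability that the reproduction distortion of a code exceeds `D`, over channel `Wn`. -/
def Code.excessProb {n : ℕ} (C : Code X Y Xh n) (P : X → ℝ) (d : X → Xh → ℝ)
    (Wn : (Fin n → X) → (Fin n → Y) → ℝ) (D : ℝ) : ℝ :=
  ∑ xs, ∑ ys, ∑ m, iid P n xs * Wn xs ys * C.enc xs m * ind (D < dseq d n xs (C.dec m ys))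

/-- a sequence of channels from `X`-sequences to `Y`-sequences. -/
abbrev ChannelSeq (X Y : Type*) := ∀ n : ℕ, (Fin n → X) → (Fin n → Y) → ℝ

/-- probability that the side-information distortion exceeds `E`. -/
def excessSideProb (P : X → ℝ) (e : X → Y → ℝ) {n : ℕ}
    (Wn : (Fin n → X) → (Fin n → Y) → ℝ) (E : ℝ) : ℝ :=
  ∑ xs, ∑ ys, iid P n xs * Wn xs ys * ind (E < dseq e n xs ys)

/-- expected side-information distortion at blocklength `n`. -/
def avgSideDist (P : X → ℝ) (e : X → Y → ℝ) {n : ℕ}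
    (Wn : (Fin n → X) → (Fin n → Y) → ℝ) : ℝ :=
  ∑ xs, ∑ ys, iid P n xs * Wn xs ys * dseq e n xs ys

/-- the maximum distortion constrained class `𝒲_m(E)`. -/
def MaxClass (P : X → ℝ) (e : X → Y → ℝ) (E : ℝ) : Set (ChannelSeq X Y) :=
  {Wseq | (∀ n, IsChannel (Wseq n)) ∧
    ∀ δ > (0:ℝ), ∃ n0 : ℕ, ∀ n ≥ n0, excessSideProb P e (Wseq n) E ≤ δ}

/-- the average distortion constrained class `𝒲_a(E)`. -/
def AvgClass (P : X → ℝ) (e : X → Y → ℝ) (E : ℝ) : Set (ChannelSeq X Y) :=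
  {Wseq | (∀ n, IsChannel (Wseq n)) ∧ ∀ n, 1 ≤ n → avgSideDist P e (Wseq n) ≤ E}

/-- `R` is an achievable rate at distortion level `D`, universally for the class `WC`
of channel sequences. -/
def Achievable (P : X → ℝ) (d : X → Xh → ℝ) (WC : Set (ChannelSeq X Y)) (D R : ℝ) : Prop :=
  ∀ ε > (0:ℝ), ∃ n0 : ℕ, ∃ C : ∀ n, Code X Y Xh n, ∀ n ≥ n0,
    Real.logb 2 ((C n).M : ℝ) / (n : ℝ) ≤ R + ε ∧
    ∀ Wseq ∈ WC, (C n).expDist P d (Wseq n) ≤ D + ε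

/-- the rate-distortion function `R_m(D|E)` of the maximum distortion constrained class. -/
def Rm (P : X → ℝ) (e : X → Y → ℝ) (d : X → Xh → ℝ) (D E : ℝ) : ℝ :=
  sInf {R | Achievable P d (MaxClass P e E) D R}

/-- the rate-distortion function `R_a(D|E)` of the average distortion constrained class. -/
def Ra (P : X → ℝ) (e : X → Y → ℝ) (d : X → Xh → ℝ) (D E : ℝ) : ℝ :=
  sInf {R | Achievable P d (AvgClass P e E) D R}

end Codes

/-- a Heegard–Berger code: one encoder and two decoders. -/
structure HBCode (X Y Xh : Type*) (n : ℕ) where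
  M : ℕ
  Mpos : 0 < M
  enc : (Fin n → X) → Fin M
  dec1 : Fin M → (Fin n → Y) → Fin n → Xh
  dec2 : Fin M → (Fin n → Y) → Fin n → Xh

section HB

variable {X Y Xh : Type*} [Fintype X] [Fintype Y] [Fintype Xh]

/-- expected distortion of one branch of a Heegard–Berger code over the memoryless
extension of the single-letter channel `W`. -/
def hbExpDist {n M : ℕ} (P : X → ℝ) (d : X → Xh → ℝ) (W : X → Y → ℝ)
    (enc : (Fin n → X) → Fin M) (dec : Fin M → (Fin n → Y) → Fin n → Xh) : ℝ :=
  ∑ xs, ∑ ys, iid P n xs * memoryless W n xs ys * dseq d n xs (dec (enc xs) ys)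

/-- achievability for the Heegard–Berger problem with side-information channels `W₁, W₂`. -/
def HBAchievable (P : X → ℝ) (d : X → Xh → ℝ) (W₁ W₂ : X → Y → ℝ) (D₁ D₂ R : ℝ) : Prop :=
  ∀ ε > (0:ℝ), ∃ n0 : ℕ, ∃ C : ∀ n, HBCode X Y Xh n, ∀ n ≥ n0,
    Real.logb 2 ((C n).M : ℝ) / (n : ℝ) ≤ R + ε ∧
    hbExpDist P d W₁ (C n).enc (C n).dec1 ≤ D₁ + ε ∧
    hbExpDist P d W₂ (C n).enc (C n).dec2 ≤ D₂ + ε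

/-- the Heegard–Berger rate-distortion function `R_HB(D₁,D₂|W₁,W₂)`. -/
def RHB (P : X → ℝ) (d : X → Xh → ℝ) (W₁ W₂ : X → Y → ℝ) (D₁ D₂ : ℝ) : ℝ :=
  sInf {R | HBAchievable P d W₁ W₂ D₁ D₂ R}

end HB

/-- the classical (no side-information) rate-distortion function `R(D)`. -/
def RD {X Xh : Type*} [Fintype X] [Fintype Xh] (P : X → ℝ) (d : X → Xh → ℝ) (D : ℝ) : ℝ :=
  sInf ((fun Q : X → Xh → ℝ => mutInf fun p : X × Xh => P p.1 * Q p.1 p.2) ''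
    {Q | IsChannel Q ∧ (∑ x, ∑ xh, P x * Q x xh * d x xh) ≤ D})

section Types

variable {X Y : Type*} [Fintype X] [Fintype Y] [DecidableEq X] [DecidableEq Y]

/-- the empirical distribution (type) `P_{x^n}` of a sequence. -/
def empDist {n : ℕ} (xs : Fin n → X) (a : X) : ℝ :=
  ((Finset.univ.filter fun t => xs t = a).card : ℝ) / n

/-- the joint empirical distribution (joint type) of a pair of sequences. -/
def empJoint {n : ℕ} (xs : Fin n → X) (ys : Fin n → Y) (p : X × Y) : ℝ :=
  ((Finset.univ.filter fun t => xs t = p.1 ∧ ys t = p.2).card : ℝ) / n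

/-- `x^n` is `P`-typical with constant `δ`. -/
def isTypical {n : ℕ} (P : X → ℝ) (δ : ℝ) (xs : Fin n → X) : Prop :=
  (∀ a, |empDist xs a - P a| ≤ δ) ∧ ∀ t, P (xs t) ≠ 0

/-- `y^n` lies in the `W`-shell `T_W(x^n)` of `x^n`. -/
def inShell {n : ℕ} (xs : Fin n → X) (ys : Fin n → Y) (W : X → Y → ℝ) : Prop :=
  ∀ a b, empJoint xs ys (a, b) = empDist xs a * W a b

/-- cardinality of the `W`-shell of `x^n`. -/
def shellCard {n : ℕ} (xs : Fin n → X) (W : X → Y → ℝ) : ℕ :=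
  Set.ncard {ys : Fin n → Y | inShell xs ys W}

end Types

/-- `W` is a conditional type with denominator `n` (all entries are multiples of `1/n`). -/
def isCondType {X Y : Type*} (n : ℕ) (W : X → Y → ℝ) : Prop :=
  ∀ x y, ∃ k : ℕ, W x y = (k : ℝ) / n

section Perm

variable {X Y Xh : Type*} [Fintype X] [Fintype Y] [Fintype Xh]

/-- probability, under the permuted source/side-information pair, that the reproduction
distortion of the code `C` exceeds `D`. -/
def permExcess {n : ℕ} (Pxy : (Fin n → X) × (Fin n → Y) → ℝ) (C : Code X Y Xh n)
    (d : X → Xh → ℝ) (D : ℝ) (π : Equiv.Perm (Fin n)) : ℝ :=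
  ∑ p : (Fin n → X) × (Fin n → Y), ∑ m,
    Pxy p * C.enc (p.1 ∘ π) m * ind (D < dseq d n (p.1 ∘ π) (C.dec m (p.2 ∘ π)))

end Perm


-- ===================== auxiliary lemmas =====================
section Aux

open Finset

lemma sum_pi_prod {κ A : Type*} [Fintype κ] [DecidableEq κ] [Fintype A]
    (g : κ → A → ℝ) : ∑ f : κ → A, ∏ i, g i (f i) = ∏ i, ∑ a, g i a := by
  rw [Finset.prod_univ_sum (fun _ => Finset.univ) g, Fintype.piFinset_univ]

lemma sum_pi_prod_marked {κ A : Type*} [Fintype κ] [DecidableEq κ] [Fintype A]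
    (g : κ → A → ℝ) (h : A → ℝ) (t : κ) (hg : ∀ i, ∑ a, g i a = 1) :
    ∑ f : κ → A, (∏ i, g i (f i)) * h (f t) = ∑ a, g t a * h a := by
  have key : ∀ f : κ → A, (∏ i, g i (f i)) * h (f t)
      = ∏ i, (g i (f i) * if i = t then h (f i) else 1) := by
    intro f
    rw [Finset.prod_mul_distrib, Finset.prod_ite_eq' Finset.univ t (fun i => h (f i))]
    simp
  calc ∑ f : κ → A, (∏ i, g i (f i)) * h (f t)
      = ∑ f : κ → A, ∏ i, (g i (f i) * if i = t then h (f i) else 1) :=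
        Finset.sum_congr rfl fun f _ => key f
    _ = ∏ i, ∑ a, (g i a * if i = t then h a else 1) :=
        sum_pi_prod (fun i a => g i a * if i = t then h a else 1)
    _ = ∑ a, g t a * h a := by
        rw [Finset.prod_eq_single t]
        · simp
        · intro i _ hit
          simp [hit, hg i]
        · simp

section Basic
variable {X Y Xh : Type*} [Fintype X] [Fintype Y] [Fintype Xh]

lemma iid_nonneg {P : X → ℝ} (hP : ∀ a, 0 ≤ P a) (n : ℕ) (xs : Fin n → X) :
    0 ≤ iid P n xs := Finset.prod_nonneg fun _ _ => hP _

lemma iid_sum {P : X → ℝ} (hP : IsDist P) (n : ℕ) : ∑ xs : Fin n → X, iid P n xs = 1 := by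
  unfold iid
  rw [sum_pi_prod (fun _ a => P a)]
  simp [hP.2]

lemma memoryless_nonneg {W : X → Y → ℝ} (hW : IsChannel W) (n : ℕ) (xs : Fin n → X)
    (ys : Fin n → Y) : 0 ≤ memoryless W n xs ys := Finset.prod_nonneg fun _ _ => (hW _).1 _

lemma memoryless_sum {W : X → Y → ℝ} (hW : IsChannel W) (n : ℕ) (xs : Fin n → X) :
    ∑ ys : Fin n → Y, memoryless W n xs ys = 1 := by
  unfold memoryless
  rw [sum_pi_prod (fun t b => W (xs t) b)]
  simp [fun t => (hW (xs t)).2]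

lemma dseq_nonneg' {d : X → Xh → ℝ} (hd0 : ∀ x xh, 0 ≤ d x xh) (n : ℕ)
    (xs : Fin n → X) (ys : Fin n → Xh) : 0 ≤ dseq d n xs ys :=
  div_nonneg (Finset.sum_nonneg fun _ _ => hd0 _ _) (Nat.cast_nonneg n)

lemma dseq_le' {d : X → Xh → ℝ} {dmax : ℝ} (hdm : 0 ≤ dmax)
    (hdmax : ∀ x xh, d x xh ≤ dmax) (n : ℕ) (xs : Fin n → X) (ys : Fin n → Xh) :
    dseq d n xs ys ≤ dmax := by
  rcases Nat.eq_zero_or_pos n with h | h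
  · subst h; simp [dseq, hdm]
  · have hsum : ∑ t, d (xs t) (ys t) ≤ (n : ℝ) * dmax := by
      calc ∑ t : Fin n, d (xs t) (ys t) ≤ ∑ _t : Fin n, dmax :=
        Finset.sum_le_sum fun t _ => hdmax _ _
      _ = (n : ℝ) * dmax := by simp [mul_comm]
    rw [dseq, div_le_iff₀ (by exact_mod_cast h)]
    linarith [hsum]

lemma sum_sum_pair {n : ℕ} (f : (Fin n → X) → (Fin n → Y) → ℝ) :
    ∑ xs, ∑ ys, f xs ys = ∑ Z : Fin n → X × Y, f (fun t => (Z t).1) (fun t => (Z t).2) := by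
  have h1 : ∑ p : (Fin n → X) × (Fin n → Y), f p.1 p.2 = ∑ xs, ∑ ys, f xs ys :=
    Fintype.sum_prod_type _
  rw [← h1]
  exact (Fintype.sum_equiv (Equiv.arrowProdEquivProdArrow (Fin n) (fun _ => X) (fun _ => Y)) _ _
    (fun Z => by simp [Equiv.arrowProdEquivProdArrow])).symm

lemma hbExpDist_nonneg {n M : ℕ} {P : X → ℝ} (hP : ∀ a, 0 ≤ P a) {W : X → Y → ℝ}
    (hW : IsChannel W) {d : X → Xh → ℝ} (hd0 : ∀ x xh, 0 ≤ d x xh)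
    (enc : (Fin n → X) → Fin M) (dec : Fin M → (Fin n → Y) → Fin n → Xh) :
    0 ≤ hbExpDist P d W enc dec :=
  Finset.sum_nonneg fun xs _ => Finset.sum_nonneg fun ys _ =>
    mul_nonneg (mul_nonneg (iid_nonneg hP n xs) (memoryless_nonneg hW n xs ys))
      (dseq_nonneg' hd0 n xs _)

lemma hbExpDist_le {n M : ℕ} {P : X → ℝ} (hP : IsDist P) {W : X → Y → ℝ}
    (hW : IsChannel W) {d : X → Xh → ℝ} {dmax : ℝ} (hdm : 0 ≤ dmax)
    (hdmax : ∀ x xh, d x xh ≤ dmax)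
    (enc : (Fin n → X) → Fin M) (dec : Fin M → (Fin n → Y) → Fin n → Xh) :
    hbExpDist P d W enc dec ≤ dmax := by
  unfold hbExpDist
  calc ∑ xs, ∑ ys, iid P n xs * memoryless W n xs ys * dseq d n xs (dec (enc xs) ys)
      ≤ ∑ xs, ∑ ys, iid P n xs * memoryless W n xs ys * dmax := by
        refine Finset.sum_le_sum fun xs _ => Finset.sum_le_sum fun ys _ => ?_
        exact mul_le_mul_of_nonneg_left (dseq_le' hdm hdmax n xs _)
          (mul_nonneg (iid_nonneg hP.1 n xs) (memoryless_nonneg hW n xs ys))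
    _ = dmax := by
        have h1 : ∀ xs : Fin n → X,
            ∑ ys : Fin n → Y, iid P n xs * memoryless W n xs ys * dmax
              = iid P n xs * dmax := by
          intro xs
          rw [← Finset.sum_mul, ← Finset.mul_sum, memoryless_sum hW, mul_one]
        rw [Finset.sum_congr rfl fun xs _ => h1 xs, ← Finset.sum_mul, iid_sum hP, one_mul]

end Basic
end Aux

section Rep

def blockEquiv (n m : ℕ) : Fin m ≃ (Fin (m / n) × Fin n) ⊕ Fin (m % n) :=
  (finCongr (by rw [mul_comm]; exact Nat.div_add_mod m n)).symm.trans
    (finSumFinEquiv.symm.trans (Equiv.sumCongr finProdFinEquiv.symm (Equiv.refl _)))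

def splitEquiv (n m : ℕ) (C : Type*) :
    (Fin m → C) ≃ (Fin (m / n) → Fin n → C) × (Fin (m % n) → C) where
  toFun Z := (fun i j => Z ((blockEquiv n m).symm (.inl (i, j))),
    fun k => Z ((blockEquiv n m).symm (.inr k)))
  invFun FG t := Sum.elim (fun p => FG.1 p.1 p.2) FG.2 (blockEquiv n m t)
  left_inv Z := by
    funext t
    rcases h : blockEquiv n m t with p | k
    · simp only [h, Sum.elim_inl]
      rw [← h, Equiv.symm_apply_apply]
    · simp only [h, Sum.elim_inr]
      rw [← h, Equiv.symm_apply_apply]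
  right_inv FG := by
    ext <;> simp [Equiv.apply_symm_apply]

@[simp] lemma splitEquiv_symm_inl {n m : ℕ} {C : Type*}
    (FG : (Fin (m / n) → Fin n → C) × (Fin (m % n) → C)) (i : Fin (m / n)) (j : Fin n) :
    (splitEquiv n m C).symm FG ((blockEquiv n m).symm (.inl (i, j))) = FG.1 i j := by
  show Sum.elim _ _ (blockEquiv n m ((blockEquiv n m).symm (.inl (i, j)))) = _
  rw [Equiv.apply_symm_apply]
  rfl

@[simp] lemma splitEquiv_symm_inr {n m : ℕ} {C : Type*}
    (FG : (Fin (m / n) → Fin n → C) × (Fin (m % n) → C)) (k : Fin (m % n)) :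
    (splitEquiv n m C).symm FG ((blockEquiv n m).symm (.inr k)) = FG.2 k := by
  show Sum.elim _ _ (blockEquiv n m ((blockEquiv n m).symm (.inr k))) = _
  rw [Equiv.apply_symm_apply]
  rfl

variable {X Y Xh : Type*} [Fintype X] [Fintype Y] [Fintype Xh] [Nonempty Xh]

def repEnc (n : ℕ) {M : ℕ} (enc : (Fin n → X) → Fin M) (m : ℕ) :
    (Fin m → X) → Fin (M ^ (m / n)) := fun xs =>
  finFunctionFinEquiv fun i => enc fun j => xs ((blockEquiv n m).symm (.inl (i, j)))

def repDec (n : ℕ) {M : ℕ} (dec : Fin M → (Fin n → Y) → Fin n → Xh) (m : ℕ) :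
    Fin (M ^ (m / n)) → (Fin m → Y) → Fin m → Xh := fun mc ys t =>
  Sum.elim
    (fun p : Fin (m / n) × Fin n =>
      dec (finFunctionFinEquiv.symm mc p.1)
        (fun j' => ys ((blockEquiv n m).symm (.inl (p.1, j')))) p.2)
    (fun _ => Classical.arbitrary Xh) (blockEquiv n m t)

lemma repDec_inl {n M : ℕ} (dec : Fin M → (Fin n → Y) → Fin n → Xh) {m : ℕ}
    (mc : Fin (M ^ (m / n))) (ys : Fin m → Y) (i : Fin (m / n)) (j : Fin n) :
    repDec n dec m mc ys ((blockEquiv n m).symm (.inl (i, j)))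
      = dec (finFunctionFinEquiv.symm mc i)
          (fun j' => ys ((blockEquiv n m).symm (.inl (i, j')))) j := by
  unfold repDec
  rw [Equiv.apply_symm_apply]
  rfl

lemma repDec_inr {n M : ℕ} (dec : Fin M → (Fin n → Y) → Fin n → Xh) {m : ℕ}
    (mc : Fin (M ^ (m / n))) (ys : Fin m → Y) (k : Fin (m % n)) :
    repDec n dec m mc ys ((blockEquiv n m).symm (.inr k)) = Classical.arbitrary Xh := by
  unfold repDec
  rw [Equiv.apply_symm_apply]
  rfl

lemma repEnc_block {n M : ℕ} (enc : (Fin n → X) → Fin M) {m : ℕ}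
    (xs : Fin m → X) (i : Fin (m / n)) :
    finFunctionFinEquiv.symm (repEnc n enc m xs) i
      = enc (fun j => xs ((blockEquiv n m).symm (.inl (i, j)))) := by
  unfold repEnc
  rw [Equiv.symm_apply_apply]

lemma rep_hbExpDist_le
    (P : X → ℝ) (hP : IsDist P) (W : X → Y → ℝ) (hW : IsChannel W)
    (d : X → Xh → ℝ) (dmax : ℝ) (hd0 : ∀ x xh, 0 ≤ d x xh) (hdm : 0 ≤ dmax)
    (hdmax : ∀ x xh, d x xh ≤ dmax)
    {n : ℕ} (hn : 0 < n) {M : ℕ} (enc : (Fin n → X) → Fin M)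
    (dec : Fin M → (Fin n → Y) → Fin n → Xh) {m : ℕ} (hm : 0 < m) :
    hbExpDist P d W (repEnc n enc m) (repDec n dec m)
      ≤ hbExpDist P d W enc dec + dmax * n / m := by
  classical
  set q := m / n with hq
  set s := m % n with hs
  set E := blockEquiv n m with hE
  set g : X × Y → ℝ := fun p => P p.1 * W p.1 p.2 with hgdef
  have hgnn : ∀ p, 0 ≤ g p := fun p => mul_nonneg (hP.1 _) ((hW _).1 _)
  have hg1 : ∑ p : X × Y, g p = 1 := by
    rw [Fintype.sum_prod_type]
    have hx : ∀ x, ∑ y, g (x, y) = P x := fun x => by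
      simp only [hgdef]
      rw [← Finset.mul_sum, (hW x).2, mul_one]
    rw [Finset.sum_congr rfl fun x _ => hx x]
    exact hP.2
  set FB : (Fin n → X × Y) → ℝ := fun z => ∏ j, g (z j) with hFBdef
  have hFBnn : ∀ z, 0 ≤ FB z := fun z => Finset.prod_nonneg fun _ _ => hgnn _
  have hFB1 : ∑ z : Fin n → X × Y, FB z = 1 := by
    rw [hFBdef, sum_pi_prod (fun _ p => g p)]
    simp [hg1]
  set hblk : (Fin n → X × Y) → ℝ := fun z =>
    ∑ j, d ((z j).1) (dec (enc fun j' => (z j').1) (fun j' => (z j').2) j) with hblkdef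
  have hblknn : ∀ z, 0 ≤ hblk z := fun z => Finset.sum_nonneg fun _ _ => hd0 _ _
  have hbase : ∑ z : Fin n → X × Y, FB z * hblk z = (n : ℝ) * hbExpDist P d W enc dec := by
    unfold hbExpDist
    rw [sum_sum_pair (f := fun xs ys =>
      iid P n xs * memoryless W n xs ys * dseq d n xs (dec (enc xs) ys))]
    rw [Finset.mul_sum]
    refine Finset.sum_congr rfl fun Z _ => ?_
    have h1 : iid P n (fun t => (Z t).1) * memoryless W n (fun t => (Z t).1)
        (fun t => (Z t).2) = FB Z := by
      rw [hFBdef, iid, memoryless, ← Finset.prod_mul_distrib]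
    have h2 : dseq d n (fun t => (Z t).1)
        (dec (enc fun t => (Z t).1) (fun t => (Z t).2)) = hblk Z / n := by
      rw [dseq, hblkdef]
    rw [h1, h2]
    field_simp
  -- main change of variables
  have key : hbExpDist P d W (repEnc n enc m) (repDec n dec m)
      = ∑ F : Fin q → Fin n → X × Y, ∑ G : Fin s → X × Y,
          ((∏ i, FB (F i)) * ∏ k, g (G k)) *
            (((∑ i, hblk (F i)) + ∑ k, d ((G k).1) (Classical.arbitrary Xh)) / m) := by
    unfold hbExpDist
    rw [sum_sum_pair (f := fun xs ys => iid P m xs * memoryless W m xs ys *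
      dseq d m xs (repDec n dec m (repEnc n enc m xs) ys))]
    rw [← Equiv.sum_comp (splitEquiv n m (X × Y)).symm]
    rw [← Fintype.sum_prod_type']
    refine Finset.sum_congr rfl fun FG _ => ?_
    obtain ⟨F, G⟩ := FG
    set Z : Fin m → X × Y := (splitEquiv n m (X × Y)).symm (F, G) with hZdef
    have hZl : ∀ i j, Z (E.symm (.inl (i, j))) = F i j := fun i j =>
      splitEquiv_symm_inl (F, G) i j
    have hZr : ∀ k, Z (E.symm (.inr k)) = G k := fun k =>
      splitEquiv_symm_inr (F, G) k
    have h1 : iid P m (fun t => (Z t).1) * memoryless W m (fun t => (Z t).1)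
        (fun t => (Z t).2) = (∏ i, FB (F i)) * ∏ k, g (G k) := by
      rw [iid, memoryless, ← Finset.prod_mul_distrib]
      have : ∀ t, P (Z t).1 * W (Z t).1 (Z t).2 = g (Z t) := fun _ => rfl
      rw [Finset.prod_congr rfl fun t _ => this t]
      rw [← Equiv.prod_comp E.symm (fun t => g (Z t))]
      rw [Fintype.prod_sum_type]
      congr 1
      · rw [Fintype.prod_prod_type]
        simp only [hZl, hFBdef]
      · simp only [hZr]
    have h2 : dseq d m (fun t => (Z t).1)
        (repDec n dec m (repEnc n enc m (fun t => (Z t).1)) (fun t => (Z t).2))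
        = ((∑ i, hblk (F i)) + ∑ k, d ((G k).1) (Classical.arbitrary Xh)) / m := by
      rw [dseq]
      congr 1
      rw [← Equiv.sum_comp E.symm (fun t => d ((Z t).1)
        (repDec n dec m (repEnc n enc m (fun t' => (Z t').1)) (fun t' => (Z t').2) t))]
      rw [Fintype.sum_sum_type]
      congr 1
      · rw [Fintype.sum_prod_type]
        refine Finset.sum_congr rfl fun i _ => ?_
        refine Finset.sum_congr rfl fun j _ => ?_
        rw [repDec_inl, repEnc_block]
        simp only [hZl, hblkdef, show ∀ i j, Z ((blockEquiv n m).symm (.inl (i, j))) = F i j from hZl]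
      · refine Finset.sum_congr rfl fun k _ => ?_
        rw [repDec_inr]
        simp only [hZr]
    rw [h1, h2]
  -- masses
  have hGmass : ∑ G : Fin s → X × Y, ∏ k, g (G k) = 1 := by
    rw [sum_pi_prod (fun _ p => g p)]
    simp [hg1]
  have hFmass : ∑ F : Fin q → Fin n → X × Y, ∏ i, FB (F i) = 1 := by
    rw [sum_pi_prod (fun _ z => FB z)]
    simp [hFB1]
  set hbB := hbExpDist P d W enc dec with hhbB
  have hbB0 : 0 ≤ hbB := hbExpDist_nonneg hP.1 hW hd0 enc dec
  have hm' : (0:ℝ) < m := by exact_mod_cast hm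
  -- split into two sums
  have split : ∀ (F : Fin q → Fin n → X × Y) (G : Fin s → X × Y),
      ((∏ i, FB (F i)) * ∏ k, g (G k)) *
        (((∑ i, hblk (F i)) + ∑ k, d ((G k).1) (Classical.arbitrary Xh)) / m)
      = (((∏ i, FB (F i)) * ∏ k, g (G k)) * (∑ i, hblk (F i))) / m
        + (((∏ i, FB (F i)) * ∏ k, g (G k)) * (∑ k, d ((G k).1) (Classical.arbitrary Xh))) / m := by
    intro F G
    ring
  have hS1 : ∑ F : Fin q → Fin n → X × Y, ∑ G : Fin s → X × Y,
      ((∏ i, FB (F i)) * ∏ k, g (G k)) * (∑ i, hblk (F i))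
      = (q : ℝ) * ((n : ℝ) * hbB) := by
    have h1F : ∀ F : Fin q → Fin n → X × Y, ∑ G : Fin s → X × Y,
        ((∏ i, FB (F i)) * ∏ k, g (G k)) * (∑ i, hblk (F i))
        = (∏ i, FB (F i)) * (∑ i, hblk (F i)) := by
      intro F
      rw [← Finset.sum_mul, ← Finset.mul_sum, hGmass, mul_one]
    rw [Finset.sum_congr rfl fun F _ => h1F F]
    calc ∑ F : Fin q → Fin n → X × Y, (∏ i, FB (F i)) * (∑ i, hblk (F i))
        = ∑ F : Fin q → Fin n → X × Y, ∑ i, (∏ i', FB (F i')) * hblk (F i) := by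
          simp_rw [Finset.mul_sum]
      _ = ∑ i : Fin q, ∑ F : Fin q → Fin n → X × Y, (∏ i', FB (F i')) * hblk (F i) :=
          Finset.sum_comm
      _ = ∑ _i : Fin q, ∑ z : Fin n → X × Y, FB z * hblk z :=
          Finset.sum_congr rfl fun i _ =>
            sum_pi_prod_marked (fun _ => FB) hblk i (fun _ => hFB1)
      _ = (q : ℝ) * ((n : ℝ) * hbB) := by
          rw [Finset.sum_const, hbase]
          simp [nsmul_eq_mul]
  have hS2 : ∑ F : Fin q → Fin n → X × Y, ∑ G : Fin s → X × Y,
      ((∏ i, FB (F i)) * ∏ k, g (G k)) * (∑ k, d ((G k).1) (Classical.arbitrary Xh))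
      ≤ (s : ℝ) * dmax := by
    have hpt : ∀ (F : Fin q → Fin n → X × Y) (G : Fin s → X × Y),
        ((∏ i, FB (F i)) * ∏ k, g (G k)) * (∑ k, d ((G k).1) (Classical.arbitrary Xh))
        ≤ ((∏ i, FB (F i)) * ∏ k, g (G k)) * ((s : ℝ) * dmax) := by
      intro F G
      refine mul_le_mul_of_nonneg_left ?_
        (mul_nonneg (Finset.prod_nonneg fun _ _ => hFBnn _)
          (Finset.prod_nonneg fun _ _ => hgnn _))
      calc ∑ k : Fin s, d ((G k).1) (Classical.arbitrary Xh) ≤ ∑ _k : Fin s, dmax :=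
            Finset.sum_le_sum fun _ _ => hdmax _ _
        _ = (s : ℝ) * dmax := by simp [mul_comm]
    calc ∑ F : Fin q → Fin n → X × Y, ∑ G : Fin s → X × Y,
        ((∏ i, FB (F i)) * ∏ k, g (G k)) * (∑ k, d ((G k).1) (Classical.arbitrary Xh))
        ≤ ∑ F : Fin q → Fin n → X × Y, ∑ G : Fin s → X × Y,
            ((∏ i, FB (F i)) * ∏ k, g (G k)) * ((s : ℝ) * dmax) :=
          Finset.sum_le_sum fun F _ => Finset.sum_le_sum fun G _ => hpt F G
      _ = (s : ℝ) * dmax := by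
          have : ∀ F : Fin q → Fin n → X × Y, ∑ G : Fin s → X × Y,
              ((∏ i, FB (F i)) * ∏ k, g (G k)) * ((s : ℝ) * dmax)
              = (∏ i, FB (F i)) * ((s : ℝ) * dmax) := by
            intro F
            rw [← Finset.sum_mul, ← Finset.mul_sum, hGmass, mul_one]
          rw [Finset.sum_congr rfl fun F _ => this F, ← Finset.sum_mul, hFmass, one_mul]
  rw [key]
  have keysplit : ∑ F : Fin q → Fin n → X × Y, ∑ G : Fin s → X × Y,
      ((∏ i, FB (F i)) * ∏ k, g (G k)) *
        (((∑ i, hblk (F i)) + ∑ k, d ((G k).1) (Classical.arbitrary Xh)) / m)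
      = (∑ F : Fin q → Fin n → X × Y, ∑ G : Fin s → X × Y,
          ((∏ i, FB (F i)) * ∏ k, g (G k)) * (∑ i, hblk (F i))) / m
        + (∑ F : Fin q → Fin n → X × Y, ∑ G : Fin s → X × Y,
          ((∏ i, FB (F i)) * ∏ k, g (G k)) *
            (∑ k, d ((G k).1) (Classical.arbitrary Xh))) / m := by
    rw [Finset.sum_congr rfl fun F _ => Finset.sum_congr rfl fun G _ => split F G]
    rw [Finset.sum_div, Finset.sum_div, ← Finset.sum_add_distrib]
    exact Finset.sum_congr rfl fun F _ => by rw [Finset.sum_div, Finset.sum_div,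
      ← Finset.sum_add_distrib]
  rw [keysplit, hS1]
  have hqn : ((q : ℝ) * n) ≤ (m : ℝ) := by
    have := Nat.div_mul_le_self m n
    exact_mod_cast this
  have hsn : (s : ℝ) ≤ (n : ℝ) := by
    have : s < n := Nat.mod_lt m hn
    exact_mod_cast this.le
  have h1 : (q : ℝ) * ((n : ℝ) * hbB) / m ≤ hbB := by
    rw [div_le_iff₀ hm']
    calc (q : ℝ) * ((n : ℝ) * hbB) = ((q : ℝ) * n) * hbB := by ring
      _ ≤ (m : ℝ) * hbB := mul_le_mul_of_nonneg_right hqn hbB0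
      _ = hbB * m := by ring
  have h2 : (∑ F : Fin q → Fin n → X × Y, ∑ G : Fin s → X × Y,
      ((∏ i, FB (F i)) * ∏ k, g (G k)) *
        (∑ k, d ((G k).1) (Classical.arbitrary Xh))) / m ≤ dmax * n / m := by
    have hle : (∑ F : Fin q → Fin n → X × Y, ∑ G : Fin s → X × Y,
        ((∏ i, FB (F i)) * ∏ k, g (G k)) *
          (∑ k, d ((G k).1) (Classical.arbitrary Xh))) ≤ dmax * n := by
      refine hS2.trans ?_
      calc (s : ℝ) * dmax ≤ (n : ℝ) * dmax := mul_le_mul_of_nonneg_right hsn hdm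
        _ = dmax * n := by ring
    exact by gcongr
  exact add_le_add h1 h2

end Rep

section Aux3
open Finset
variable {X Y Xh : Type*} [Fintype X] [Fintype Y] [Fintype Xh]

lemma pair_mass {P : X → ℝ} (hP : IsDist P) {W : X → Y → ℝ} (hW : IsChannel W) :
    ∑ p : X × Y, P p.1 * W p.1 p.2 = 1 := by
  rw [Fintype.sum_prod_type]
  have hx : ∀ x, ∑ y, P x * W x y = P x := fun x => by
    rw [← Finset.mul_sum, (hW x).2, mul_one]
  rw [Finset.sum_congr rfl fun x _ => hx x]
  exact hP.2

lemma avgSideDist_memoryless {P : X → ℝ} (hP : IsDist P) {W : X → Y → ℝ}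
    (hW : IsChannel W) (e : X → Y → ℝ) {n : ℕ} (hn : 0 < n) :
    avgSideDist P e (memoryless W n) = eDist P e W := by
  unfold avgSideDist
  rw [sum_sum_pair (f := fun xs ys => iid P n xs * memoryless W n xs ys * dseq e n xs ys)]
  have hper : ∀ Z : Fin n → X × Y,
      iid P n (fun t => (Z t).1) * memoryless W n (fun t => (Z t).1) (fun t => (Z t).2)
        * dseq e n (fun t => (Z t).1) (fun t => (Z t).2)
      = ∑ t, ((∏ t', (P (Z t').1 * W (Z t').1 (Z t').2)) * e (Z t).1 (Z t).2) / n := by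
    intro Z
    rw [iid, memoryless, ← Finset.prod_mul_distrib, dseq, ← mul_div_assoc, Finset.mul_sum,
      Finset.sum_div]
  rw [Finset.sum_congr rfl fun Z _ => hper Z, Finset.sum_comm]
  have ht : ∀ t : Fin n, ∑ Z : Fin n → X × Y,
      ((∏ t', (P (Z t').1 * W (Z t').1 (Z t').2)) * e (Z t).1 (Z t).2) / n
        = eDist P e W / n := by
    intro t
    rw [← Finset.sum_div]
    congr 1
    calc ∑ Z : Fin n → X × Y, (∏ t', (P (Z t').1 * W (Z t').1 (Z t').2)) * e (Z t).1 (Z t).2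
        = ∑ p : X × Y, (P p.1 * W p.1 p.2) * e p.1 p.2 :=
          sum_pi_prod_marked (κ := Fin n) (A := X × Y) (fun _ p => P p.1 * W p.1 p.2)
            (fun p => e p.1 p.2) t (fun _ => pair_mass hP hW)
      _ = eDist P e W := by
          rw [Fintype.sum_prod_type]
          simp [eDist]
  rw [Finset.sum_congr rfl fun t _ => ht t, Finset.sum_const]
  have hn' : ((n:ℝ)) ≠ 0 := by positivity
  simp only [Finset.card_univ, Fintype.card_fin, nsmul_eq_mul]
  field_simp

variable [Nonempty Xh]

lemma derand {n : ℕ} {P : X → ℝ} (hP : IsDist P) (d : X → Xh → ℝ)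
    (Wa Wb : X → Y → ℝ) (lam : ℝ)
    (C : Code X Y Xh n) (D' : ℝ)
    (hmix : C.expDist P d (fun xs ys => lam * memoryless Wa n xs ys
      + (1 - lam) * memoryless Wb n xs ys) ≤ D') :
    ∃ encD : (Fin n → X) → Fin C.M,
      lam * hbExpDist P d Wa encD C.dec + (1 - lam) * hbExpDist P d Wb encD C.dec ≤ D' := by
  classical
  set A : (Fin n → X) → Fin C.M → ℝ := fun xs mm =>
    ∑ ys, memoryless Wa n xs ys * dseq d n xs (C.dec mm ys) with hA
  set B : (Fin n → X) → Fin C.M → ℝ := fun xs mm =>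
    ∑ ys, memoryless Wb n xs ys * dseq d n xs (C.dec mm ys) with hB
  set score : (Fin n → X) → Fin C.M → ℝ :=
    fun xs mm => lam * A xs mm + (1 - lam) * B xs mm with hscore
  have hne : (Finset.univ : Finset (Fin C.M)).Nonempty :=
    ⟨⟨0, C.Mpos⟩, Finset.mem_univ _⟩
  have hsel : ∀ xs, ∃ mm, ∀ m', score xs mm ≤ score xs m' := fun xs => by
    obtain ⟨mm, _, hmm⟩ := Finset.exists_min_image Finset.univ (score xs) hne
    exact ⟨mm, fun m' => hmm m' (Finset.mem_univ _)⟩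
  choose encD hencD using hsel
  refine ⟨encD, ?_⟩
  have hhb : ∀ (W : X → Y → ℝ),
      hbExpDist P d W encD C.dec
        = ∑ xs, iid P n xs * ∑ ys, memoryless W n xs ys * dseq d n xs (C.dec (encD xs) ys) := by
    intro W
    unfold hbExpDist
    refine Finset.sum_congr rfl fun xs _ => ?_
    rw [Finset.mul_sum]
    exact Finset.sum_congr rfl fun ys _ => (mul_assoc _ _ _)
  have henc1 : ∀ xs, ∑ mm, C.enc xs mm = 1 := fun xs => (C.enc_channel xs).2
  have henc0 : ∀ xs mm, 0 ≤ C.enc xs mm := fun xs mm => (C.enc_channel xs).1 mm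
  have hkey : ∀ xs mm, C.enc xs mm * score xs mm
      = ∑ ys, (lam * memoryless Wa n xs ys + (1 - lam) * memoryless Wb n xs ys)
          * C.enc xs mm * dseq d n xs (C.dec mm ys) := by
    intro xs mm
    simp only [hscore, hA, hB, Finset.mul_sum, mul_add, ← Finset.sum_add_distrib]
    exact Finset.sum_congr rfl fun ys _ => by ring
  calc lam * hbExpDist P d Wa encD C.dec + (1 - lam) * hbExpDist P d Wb encD C.dec
      = ∑ xs, iid P n xs * score xs (encD xs) := by
        rw [hhb Wa, hhb Wb, Finset.mul_sum, Finset.mul_sum, ← Finset.sum_add_distrib]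
        refine Finset.sum_congr rfl fun xs _ => ?_
        simp only [hscore, hA, hB]
        ring
    _ ≤ ∑ xs, iid P n xs * (∑ mm, C.enc xs mm * score xs mm) := by
        refine Finset.sum_le_sum fun xs _ =>
          mul_le_mul_of_nonneg_left ?_ (iid_nonneg hP.1 n xs)
        calc score xs (encD xs) = ∑ mm, C.enc xs mm * score xs (encD xs) := by
              rw [← Finset.sum_mul, henc1, one_mul]
          _ ≤ ∑ mm, C.enc xs mm * score xs mm :=
              Finset.sum_le_sum fun mm _ =>
                mul_le_mul_of_nonneg_left (hencD xs mm) (henc0 xs mm)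
    _ = C.expDist P d (fun xs ys => lam * memoryless Wa n xs ys
          + (1 - lam) * memoryless Wb n xs ys) := by
        unfold Code.expDist
        refine Finset.sum_congr rfl fun xs _ => ?_
        rw [Finset.sum_comm, Finset.mul_sum]
        refine Finset.sum_congr rfl fun mm _ => ?_
        rw [hkey xs mm, Finset.mul_sum]
        exact Finset.sum_congr rfl fun ys _ => by ring
    _ ≤ D' := hmix

lemma achievable_nonneg {P : X → ℝ} {d : X → Xh → ℝ} {WC : Set (ChannelSeq X Y)}
    {D R : ℝ} (h : Achievable P d WC D R) : 0 ≤ R := by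
  by_contra hneg
  push_neg at hneg
  obtain ⟨n0, C, hC⟩ := h (-R/2) (by linarith)
  have h1 := (hC (max n0 1) (le_max_left _ _)).1
  have hM : (1:ℝ) ≤ (((C (max n0 1)).M : ℕ) : ℝ) := by exact_mod_cast (C _).Mpos
  have hlog : 0 ≤ Real.logb 2 (((C (max n0 1)).M : ℕ) : ℝ) :=
    Real.logb_nonneg one_lt_two hM
  have hn : (0:ℝ) ≤ ((max n0 1 : ℕ) : ℝ) := Nat.cast_nonneg _
  have h2 : 0 ≤ Real.logb 2 (((C (max n0 1)).M : ℕ) : ℝ) / ((max n0 1 : ℕ) : ℝ) :=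
    div_nonneg hlog hn
  linarith

lemma hbachievable_nonneg {P : X → ℝ} {d : X → Xh → ℝ} {Wa Wb : X → Y → ℝ}
    {D₁ D₂ R : ℝ} (h : HBAchievable P d Wa Wb D₁ D₂ R) : 0 ≤ R := by
  by_contra hneg
  push_neg at hneg
  obtain ⟨n0, C, hC⟩ := h (-R/2) (by linarith)
  have h1 := (hC (max n0 1) (le_max_left _ _)).1
  have hM : (1:ℝ) ≤ (((C (max n0 1)).M : ℕ) : ℝ) := by exact_mod_cast (C _).Mpos
  have hlog : 0 ≤ Real.logb 2 (((C (max n0 1)).M : ℕ) : ℝ) :=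
    Real.logb_nonneg one_lt_two hM
  have h2 : 0 ≤ Real.logb 2 (((C (max n0 1)).M : ℕ) : ℝ) / ((max n0 1 : ℕ) : ℝ) :=
    div_nonneg hlog (Nat.cast_nonneg _)
  linarith

lemma RHB_nonneg (P : X → ℝ) (d : X → Xh → ℝ) (Wa Wb : X → Y → ℝ) (D₁ D₂ : ℝ) :
    0 ≤ RHB P d Wa Wb D₁ D₂ := by
  unfold RHB
  rcases Set.eq_empty_or_nonempty {R | HBAchievable P d Wa Wb D₁ D₂ R} with h | h
  · rw [h, Real.sInf_empty]
  · exact le_csInf h fun R hR => hbachievable_nonneg hR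

variable [Nonempty X]

def fullCode (xh0 : X → Xh) (n : ℕ) : Code X Y Xh n where
  M := Fintype.card (Fin n → X)
  Mpos := Fintype.card_pos
  enc xs mm := if mm = Fintype.equivFin (Fin n → X) xs then 1 else 0
  enc_channel xs := by
    constructor
    · intro mm
      dsimp only
      split <;> norm_num
    · dsimp only
      rw [Finset.sum_ite_eq' Finset.univ (Fintype.equivFin (Fin n → X) xs) (fun _ => (1:ℝ))]
      simp
  dec mm ys t := xh0 ((Fintype.equivFin (Fin n → X)).symm mm t)

lemma exists_achievable (P : X → ℝ) (d : X → Xh → ℝ)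
    (hdZ : ∀ x, ∃ xh, d x xh = 0) (D : ℝ) (hD : 0 ≤ D) (WC : Set (ChannelSeq X Y)) :
    Achievable P d WC D (Real.logb 2 (Fintype.card X)) := by
  classical
  set xh0 : X → Xh := fun x => (hdZ x).choose with hxh0
  have hxh0spec : ∀ x, d x (xh0 x) = 0 := fun x => (hdZ x).choose_spec
  intro ε hε
  refine ⟨1, fun n => fullCode xh0 n, fun n hn => ⟨?_, ?_⟩⟩
  · have hM : (((fullCode (X := X) (Y := Y) xh0 n).M : ℕ) : ℝ)
        = ((Fintype.card X : ℕ) : ℝ) ^ n := by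
      show ((Fintype.card (Fin n → X) : ℕ) : ℝ) = _
      rw [Fintype.card_fun]
      push_cast
      simp
    rw [hM, Real.logb_pow]
    have hn' : (0:ℝ) < n := by exact_mod_cast hn
    rw [mul_comm, mul_div_assoc, div_self (ne_of_gt hn'), mul_one]
    linarith
  · intro Wseq _
    have hzero : (fullCode (X := X) (Y := Y) xh0 n).expDist P d (Wseq n) = 0 := by
      unfold Code.expDist
      refine Finset.sum_eq_zero fun xs _ => Finset.sum_eq_zero fun ys _ =>
        Finset.sum_eq_zero fun mm _ => ?_
      rcases eq_or_ne mm (Fintype.equivFin (Fin n → X) xs) with hm | hm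
      · subst hm
        have hdec : dseq d n xs
            ((fullCode (X := X) (Y := Y) xh0 n).dec (Fintype.equivFin (Fin n → X) xs) ys)
            = 0 := by
          unfold dseq
          rw [Finset.sum_eq_zero, zero_div]
          intro t _
          show d (xs t) (xh0 ((Fintype.equivFin (Fin n → X)).symm
            (Fintype.equivFin (Fin n → X) xs) t)) = 0
          rw [Equiv.symm_apply_apply]
          exact hxh0spec _
        rw [hdec, mul_zero]
      · have henc : (fullCode (X := X) (Y := Y) xh0 n).enc xs mm = 0 := by
          simp only [fullCode, ite_eq_right_iff, one_ne_zero, imp_false]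
          exact hm
        rw [henc]
        ring
    rw [hzero]
    linarith

end Aux3

section Core
open Finset Filter Topology
variable {X Y Xh : Type*} [Fintype X] [Fintype Y] [Fintype Xh]
  [Nonempty X] [Nonempty Y] [Nonempty Xh]

lemma core_lemma (P : X → ℝ) (hP : IsDist P) (e : X → Y → ℝ)
    (d : X → Xh → ℝ) (dmax : ℝ) (hd0 : ∀ x xh, 0 ≤ d x xh)
    (hdmax : ∀ x xh, d x xh ≤ dmax) (hdm : 0 ≤ dmax)
    (D E lam E₁ E₂ : ℝ) (Wa Wb : X → Y → ℝ)
    (hl0 : 0 ≤ lam) (hl1 : lam ≤ 1)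
    (hWa : Wa ∈ W1 P e E₁) (hWb : Wb ∈ W1 P e E₂)
    (hEE : lam * E₁ + (1 - lam) * E₂ ≤ E)
    {R : ℝ} (hR : Achievable P d (AvgClass P e E) D R) (hR0 : 0 ≤ R) :
    ∃ D₁ D₂ : ℝ, 0 ≤ D₁ ∧ D₁ ≤ dmax ∧ 0 ≤ D₂ ∧ D₂ ≤ dmax ∧
      lam * D₁ + (1 - lam) * D₂ ≤ D ∧ RHB P d Wa Wb D₁ D₂ ≤ R := by
  classical
  have hWaCh : IsChannel Wa := hWa.1
  have hWbCh : IsChannel Wb := hWb.1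
  have hl1' : (0:ℝ) ≤ 1 - lam := by linarith
  set Wmix : ChannelSeq X Y := fun n xs ys =>
    lam * memoryless Wa n xs ys + (1 - lam) * memoryless Wb n xs ys with hWmixdef
  have hmem : Wmix ∈ AvgClass P e E := by
    constructor
    · intro n xs
      constructor
      · intro ys
        exact add_nonneg (mul_nonneg hl0 (memoryless_nonneg hWaCh n xs ys))
          (mul_nonneg hl1' (memoryless_nonneg hWbCh n xs ys))
      · rw [Finset.sum_add_distrib, ← Finset.mul_sum, ← Finset.mul_sum,
          memoryless_sum hWaCh, memoryless_sum hWbCh]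
        ring
    · intro n hn
      have hn0 : 0 < n := hn
      have hlin : avgSideDist P e (Wmix n)
          = lam * avgSideDist P e (memoryless Wa n)
            + (1 - lam) * avgSideDist P e (memoryless Wb n) := by
        unfold avgSideDist
        rw [Finset.mul_sum, Finset.mul_sum, ← Finset.sum_add_distrib]
        refine Finset.sum_congr rfl fun xs _ => ?_
        rw [Finset.mul_sum, Finset.mul_sum, ← Finset.sum_add_distrib]
        refine Finset.sum_congr rfl fun ys _ => ?_
        show iid P n xs * (lam * memoryless Wa n xs ys
          + (1 - lam) * memoryless Wb n xs ys) * dseq e n xs ys = _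
        ring
      rw [hlin, avgSideDist_memoryless hP hWaCh e hn0, avgSideDist_memoryless hP hWbCh e hn0]
      calc lam * eDist P e Wa + (1 - lam) * eDist P e Wb
          ≤ lam * E₁ + (1 - lam) * E₂ :=
            add_le_add (mul_le_mul_of_nonneg_left hWa.2 hl0)
              (mul_le_mul_of_nonneg_left hWb.2 hl1')
        _ ≤ E := hEE
  -- per-k extraction of a derandomized code
  have hstep : ∀ k : ℕ, ∃ (n M : ℕ) (encD : (Fin n → X) → Fin M)
      (dec : Fin M → (Fin n → Y) → Fin n → Xh),
      0 < n ∧ 0 < M ∧ Real.logb 2 (M : ℝ) ≤ (n : ℝ) * (R + 1/(k+1)) ∧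
      lam * hbExpDist P d Wa encD dec + (1 - lam) * hbExpDist P d Wb encD dec
        ≤ D + 1/(k+1) := by
    intro k
    have hεk : (0:ℝ) < 1/(k+1) := by positivity
    obtain ⟨n0, C, hC⟩ := hR (1/(k+1)) hεk
    have h := hC (max n0 1) (le_max_left _ _)
    set n := max n0 1 with hn
    have hn1 : 0 < n := lt_of_lt_of_le Nat.zero_lt_one (le_max_right _ _)
    obtain ⟨encD, hencD⟩ := derand hP d Wa Wb lam (C n) (D + 1/(k+1)) (h.2 Wmix hmem)
    refine ⟨n, (C n).M, encD, (C n).dec, hn1, (C n).Mpos, ?_, hencD⟩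
    have hn' : (0:ℝ) < (n:ℝ) := by exact_mod_cast hn1
    have := h.1
    rw [div_le_iff₀ hn'] at this
    linarith [this]
  choose nsq Msq encsq decsq hn_pos hM_pos hrate hdist using hstep
  set a : ℕ → ℝ := fun k => hbExpDist P d Wa (encsq k) (decsq k) with hadef
  set b : ℕ → ℝ := fun k => hbExpDist P d Wb (encsq k) (decsq k) with hbdef
  have ha_mem : ∀ k, (a k, b k) ∈ (Set.Icc (0:ℝ) dmax) ×ˢ (Set.Icc (0:ℝ) dmax) := by
    intro k
    refine Set.mem_prod.2 ⟨⟨?_, ?_⟩, ⟨?_, ?_⟩⟩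
    · exact hbExpDist_nonneg hP.1 hWaCh hd0 _ _
    · exact hbExpDist_le hP hWaCh hdm hdmax _ _
    · exact hbExpDist_nonneg hP.1 hWbCh hd0 _ _
    · exact hbExpDist_le hP hWbCh hdm hdmax _ _
  have hK : IsCompact ((Set.Icc (0:ℝ) dmax) ×ˢ (Set.Icc (0:ℝ) dmax)) :=
    isCompact_Icc.prod isCompact_Icc
  obtain ⟨q, hqmem, φ, hφ, hconv⟩ := hK.tendsto_subseq ha_mem
  obtain ⟨Da, Db⟩ := q
  rw [Set.mem_prod] at hqmem
  have hconva : Tendsto (fun k => a (φ k)) atTop (𝓝 Da) :=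
    (continuous_fst.tendsto _).comp hconv
  have hconvb : Tendsto (fun k => b (φ k)) atTop (𝓝 Db) :=
    (continuous_snd.tendsto _).comp hconv
  have hφtop : Tendsto φ atTop atTop := hφ.tendsto_atTop
  have hεconv : Tendsto (fun k => 1/((φ k : ℝ)+1)) atTop (𝓝 0) :=
    tendsto_one_div_add_atTop_nhds_zero_nat.comp hφtop
  have hcombo : lam * Da + (1 - lam) * Db ≤ D := by
    have hf : Tendsto (fun k => lam * a (φ k) + (1 - lam) * b (φ k)) atTop
        (𝓝 (lam * Da + (1 - lam) * Db)) :=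
      ((hconva.const_mul lam).add (hconvb.const_mul (1 - lam)))
    have hg : Tendsto (fun k => D + 1/((φ k : ℝ)+1)) atTop (𝓝 D) := by
      have := tendsto_const_nhds (x := D) (f := atTop (α := ℕ)) |>.add hεconv
      simpa using this
    refine le_of_tendsto_of_tendsto' hf hg fun k => ?_
    have := hdist (φ k)
    simp only [hadef, hbdef]
    push_cast at this ⊢
    linarith [this]
  refine ⟨Da, Db, hqmem.1.1, hqmem.1.2, hqmem.2.1, hqmem.2.2, hcombo, ?_⟩
  apply csInf_le ⟨0, fun x hx => hbachievable_nonneg hx⟩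
  show HBAchievable P d Wa Wb Da Db R
  intro ε hε
  have hev1 : ∀ᶠ k in atTop, a (φ k) < Da + ε/2 :=
    hconva.eventually_lt_const (by linarith)
  have hev2 : ∀ᶠ k in atTop, b (φ k) < Db + ε/2 :=
    hconvb.eventually_lt_const (by linarith)
  have hev3 : ∀ᶠ k in atTop, 1/((φ k : ℝ)+1) < ε/2 :=
    hεconv.eventually_lt_const (by linarith)
  obtain ⟨k, hk1, hk2, hk3⟩ := (hev1.and (hev2.and hev3)).exists
  set n := nsq (φ k) with hndef
  set M := Msq (φ k) with hMdef
  set encD := encsq (φ k)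
  set dec := decsq (φ k)
  have hn0 : 0 < n := hn_pos (φ k)
  have hrt : Real.logb 2 (M : ℝ) ≤ (n : ℝ) * (R + ε/2) := by
    refine (hrate (φ k)).trans ?_
    have : R + 1/((φ k : ℝ)+1) ≤ R + ε/2 := by push_cast; linarith
    have hn' : (0:ℝ) ≤ (n:ℝ) := Nat.cast_nonneg _
    nlinarith [this, hn']
  have hda : a (φ k) ≤ Da + ε/2 := hk1.le
  have hdb : b (φ k) ≤ Db + ε/2 := hk2.le
  set n0 : ℕ := max 1 (⌈dmax * n * 2 / ε⌉₊ + 1) with hn0def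
  refine ⟨n0, fun m => {
    M := M ^ (m / n)
    Mpos := pow_pos (hM_pos (φ k)) _
    enc := repEnc n encD m
    dec1 := repDec n dec m
    dec2 := repDec n dec m }, fun m hm => ?_⟩
  have hm1 : 1 ≤ m := le_trans (le_max_left _ _) hm
  have hm' : (0:ℝ) < m := by exact_mod_cast hm1
  have hrem : dmax * n / m ≤ ε/2 := by
    have hmge : (⌈dmax * n * 2 / ε⌉₊ + 1 : ℕ) ≤ m := le_trans (le_max_right _ _) hm
    have hmge' : dmax * n * 2 / ε ≤ (m : ℝ) := by
      have h1 : dmax * n * 2 / ε ≤ (⌈dmax * n * 2 / ε⌉₊ : ℝ) := Nat.le_ceil _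
      have h2 : ((⌈dmax * n * 2 / ε⌉₊ + 1 : ℕ) : ℝ) ≤ (m:ℝ) := by exact_mod_cast hmge
      push_cast at h2
      linarith
    rw [div_le_iff₀ hm']
    rw [div_le_iff₀ hε] at hmge'
    nlinarith [hmge']
  constructor
  · -- rate
    show Real.logb 2 ((M ^ (m / n) : ℕ) : ℝ) / (m:ℝ) ≤ R + ε
    rw [div_le_iff₀ hm']
    push_cast
    rw [Real.logb_pow]
    have hqn : ((m / n : ℕ) : ℝ) * (n : ℝ) ≤ (m : ℝ) := by
      exact_mod_cast Nat.div_mul_le_self m n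
    have hq0 : (0:ℝ) ≤ ((m / n : ℕ) : ℝ) := Nat.cast_nonneg _
    have hRε : (0:ℝ) ≤ R + ε/2 := by linarith
    calc ((m / n : ℕ) : ℝ) * Real.logb 2 (M:ℝ)
        ≤ ((m / n : ℕ) : ℝ) * ((n : ℝ) * (R + ε/2)) :=
          mul_le_mul_of_nonneg_left hrt hq0
      _ = (((m / n : ℕ) : ℝ) * (n : ℝ)) * (R + ε/2) := by ring
      _ ≤ (m : ℝ) * (R + ε/2) := mul_le_mul_of_nonneg_right hqn hRε
      _ ≤ (R + ε) * m := by nlinarith [hm', hε]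
  constructor
  · -- distortion 1
    show hbExpDist P d Wa (repEnc n encD m) (repDec n dec m) ≤ Da + ε
    calc hbExpDist P d Wa (repEnc n encD m) (repDec n dec m)
        ≤ hbExpDist P d Wa encD dec + dmax * n / m :=
          rep_hbExpDist_le P hP Wa hWaCh d dmax hd0 hdm hdmax hn0 encD dec
            (lt_of_lt_of_le Nat.zero_lt_one hm1)
      _ ≤ (Da + ε/2) + ε/2 := add_le_add hda hrem
      _ = Da + ε := by ring
  · -- distortion 2
    show hbExpDist P d Wb (repEnc n encD m) (repDec n dec m) ≤ Db + ε
    calc hbExpDist P d Wb (repEnc n encD m) (repDec n dec m)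
        ≤ hbExpDist P d Wb encD dec + dmax * n / m :=
          rep_hbExpDist_le P hP Wb hWbCh d dmax hd0 hdm hdmax hn0 encD dec
            (lt_of_lt_of_le Nat.zero_lt_one hm1)
      _ ≤ (Db + ε/2) + ε/2 := add_le_add hdb hrem
      _ = Db + ε := by ring

end Core

/-- Converse bound for the average distortion class via the Heegard–Berger
rate-distortion function: `R_a(D|E) ≥ max min R_HB(D₁,D₂|W₁,W₂)`, where the max is over all
`λ ∈ [0,1]`, `E₁,E₂ ≥ 0` and single-letter channels `W₁,W₂` with `λE₁+(1−λ)E₂ ≤ E` and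
`W_j ∈ 𝒲₁(E_j)`, and the min is over all `D₁,D₂ ∈ [0,d_max]` with `λD₁+(1−λ)D₂ ≤ D`. -/
theorem Ra_converse_HB
    {X Y Xh : Type*} [Fintype X] [Fintype Y] [Fintype Xh]
    [Nonempty X] [Nonempty Y] [Nonempty Xh]
    (P : X → ℝ) (hP : IsDist P)
    (e : X → Y → ℝ) (he0 : ∀ x y, 0 ≤ e x y) (heZ : ∀ x, ∃ y, e x y = 0)
    (d : X → Xh → ℝ) (dmax : ℝ) (hd0 : ∀ x xh, 0 ≤ d x xh)
    (hdmax : ∀ x xh, d x xh ≤ dmax) (hdZ : ∀ x, ∃ xh, d x xh = 0)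
    (D E : ℝ) (hD : 0 ≤ D) (hE : 0 ≤ E) :
    sSup {r : ℝ | ∃ lam E₁ E₂ : ℝ, ∃ Wa Wb : X → Y → ℝ,
        0 ≤ lam ∧ lam ≤ 1 ∧ 0 ≤ E₁ ∧ 0 ≤ E₂ ∧
        lam * E₁ + (1 - lam) * E₂ ≤ E ∧
        Wa ∈ W1 P e E₁ ∧ Wb ∈ W1 P e E₂ ∧
        r = sInf {s : ℝ | ∃ D₁ D₂ : ℝ,
          0 ≤ D₁ ∧ D₁ ≤ dmax ∧ 0 ≤ D₂ ∧ D₂ ≤ dmax ∧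
          lam * D₁ + (1 - lam) * D₂ ≤ D ∧
          s = RHB P d Wa Wb D₁ D₂}}
      ≤ Ra P e d D E := by
  classical
  have hdm : 0 ≤ dmax := by
    obtain ⟨xh, hxh⟩ := hdZ (Classical.arbitrary X)
    calc (0:ℝ) = d (Classical.arbitrary X) xh := hxh.symm
      _ ≤ dmax := hdmax _ _
  have hA0 : Achievable P d (AvgClass P e E) D (Real.logb 2 (Fintype.card X)) :=
    exists_achievable P d hdZ D hD _
  have hRa0 : 0 ≤ Ra P e d D E :=
    le_csInf ⟨_, hA0⟩ fun R hR => achievable_nonneg hR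
  refine Real.sSup_le ?_ hRa0
  rintro r ⟨lam, E₁, E₂, Wa, Wb, hl0, hl1, hE1, hE2, hEE, hWa, hWb, rfl⟩
  refine le_csInf ⟨_, hA0⟩ fun R hR => ?_
  obtain ⟨D₁, D₂, h1, h2, h3, h4, h5, h6⟩ :=
    core_lemma P hP e d dmax hd0 hdmax hdm D E lam E₁ E₂ Wa Wb hl0 hl1 hWa hWb hEE
      hR (achievable_nonneg hR)
  have hbdd : BddBelow {s : ℝ | ∃ D₁ D₂ : ℝ,
      0 ≤ D₁ ∧ D₁ ≤ dmax ∧ 0 ≤ D₂ ∧ D₂ ≤ dmax ∧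
      lam * D₁ + (1 - lam) * D₂ ≤ D ∧ s = RHB P d Wa Wb D₁ D₂} := by
    refine ⟨0, ?_⟩
    rintro s ⟨D₁', D₂', _, _, _, _, _, rfl⟩
    exact RHB_nonneg P d Wa Wb D₁' D₂'
  have hmemS : RHB P d Wa Wb D₁ D₂ ∈ {s : ℝ | ∃ D₁ D₂ : ℝ,
      0 ≤ D₁ ∧ D₁ ≤ dmax ∧ 0 ≤ D₂ ∧ D₂ ≤ dmax ∧
      lam * D₁ + (1 - lam) * D₂ ≤ D ∧ s = RHB P d Wa Wb D₁ D₂} :=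
    ⟨D₁, D₂, h1, h2, h3, h4, h5, rfl⟩
  exact le_trans (csInf_le hbdd hmemS) h6

end UWZ
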